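/- For n ≥ 2, the function H is shift-invariant: for every x ∈ [0,1]^n and every λ ∈ [−1,1] such that (x_1+λ,…,x_n+λ) ∈ [0,1]^n, one has H(x_1+λ,…,x_n+λ) = H(x_1,…,x_n) + λ. -/

import Mathlib

/-- The median of a vector `x : Fin n → ℝ`, computed from a non-decreasing
rearrangement of `x`. -/
noncomputable def med {n : ℕ} (x : Fin n → ℝ) : ℝ :=
  if hn : 0 < n then
    if n % 2 = 1 then (x ∘ Tuple.sort x) ⟨n / 2, by omega⟩
    else ((x ∘ Tuple.sort x) ⟨n / 2 - 1, by omega⟩ +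
            (x ∘ Tuple.sort x) ⟨n / 2, by omega⟩) / 2
  else 0

open Classical in
/-- The median-based weight functions. -/
noncomputable def hw {n : ℕ} (i : Fin n) (x : Fin n → ℝ) : ℝ :=
  if ∃ c : ℝ, ∀ j, x j = c then 1 / (n : ℝ)
  else (1 / ((n : ℝ) - 1)) * (1 - |x i - med x| / ∑ j, |x j - med x|)

/-- The DYOWA function `H` associated to the median-based weight functions. -/
noncomputable def Hmed {n : ℕ} (x : Fin n → ℝ) : ℝ :=
  ∑ i, hw i x * x i

lemma comp_sort_add {n : ℕ} (x : Fin n → ℝ) (c : ℝ) :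
    (fun j => x j + c) ∘ Tuple.sort (fun j => x j + c) =
      fun k => (x ∘ Tuple.sort x) k + c := by
  have hmono : Monotone ((fun j => x j + c) ∘ Tuple.sort x) := by
    intro a b hab
    simp only [Function.comp_apply]
    exact add_le_add_left (Tuple.monotone_sort x hab) c
  have h := (Tuple.comp_sort_eq_comp_iff_monotone
    (f := fun j => x j + c) (σ := Tuple.sort x)).2 hmono
  rw [← h]
  rfl

lemma med_add {n : ℕ} (hn : 0 < n) (x : Fin n → ℝ) (c : ℝ) :
    med (fun j => x j + c) = med x + c := by
  unfold med
  have h := comp_sort_add x c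
  simp only [hn, dif_pos]
  by_cases hpar : n % 2 = 1
  · simp only [hpar, if_pos, h]
  · simp only [hpar, if_neg, not_false_iff, h]
    ring

lemma const_shift {n : ℕ} (x : Fin n → ℝ) (c : ℝ) :
    (∃ d : ℝ, ∀ j, x j + c = d) ↔ (∃ d : ℝ, ∀ j : Fin n, x j = d) := by
  constructor
  · rintro ⟨d, hd⟩; exact ⟨d - c, fun j => by have := hd j; linarith⟩
  · rintro ⟨d, hd⟩; exact ⟨d + c, fun j => by rw [hd j]⟩

lemma hw_shift {n : ℕ} (i : Fin n) (x : Fin n → ℝ) (c : ℝ) :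
    hw i (fun j => x j + c) = hw i x := by
  unfold hw
  by_cases hc : ∃ d : ℝ, ∀ j : Fin n, x j = d
  · rw [if_pos ((const_shift x c).2 hc), if_pos hc]
  · have hn : 0 < n := by
      rcases Nat.eq_zero_or_pos n with h | h
      · subst h; exact absurd ⟨0, fun j => j.elim0⟩ hc
      · exact h
    rw [if_neg (fun h => hc ((const_shift x c).1 h)), if_neg hc, med_add hn]
    have h1 : ∀ j : Fin n, (fun j => x j + c) j - (med x + c) = x j - med x :=
      fun j => by simp
    simp only [h1]

lemma hw_sum {n : ℕ} (hn : 2 ≤ n) (x : Fin n → ℝ) : ∑ i, hw i x = 1 := by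
  unfold hw
  by_cases hc : ∃ d : ℝ, ∀ j : Fin n, x j = d
  · simp only [hc, if_pos]
    rw [Finset.sum_const, Finset.card_univ, Fintype.card_fin, nsmul_eq_mul]
    field_simp
  · simp only [hc, if_neg, not_false_iff]
    have hS : (0 : ℝ) < ∑ j, |x j - med x| := by
      rcases lt_or_eq_of_le (Finset.sum_nonneg fun j _ => abs_nonneg (x j - med x)) with h | h
      · exact h
      · exfalso
        apply hc
        refine ⟨med x, fun j => ?_⟩
        have := (Finset.sum_eq_zero_iff_of_nonneg
          (fun j _ => abs_nonneg (x j - med x))).1 h.symm j (Finset.mem_univ j)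
        have := abs_eq_zero.1 this
        linarith
    rw [← Finset.mul_sum]
    rw [Finset.sum_sub_distrib, Finset.sum_const, Finset.card_univ, Fintype.card_fin,
      nsmul_eq_mul, mul_one, ← Finset.sum_div, div_self hS.ne']
    have hn1 : (n : ℝ) - 1 ≠ 0 := by
      have : (2 : ℝ) ≤ n := by exact_mod_cast hn
      linarith
    field_simp

/-- The function `H` is shift-invariant. -/
theorem Hmed_shift_invariant {n : ℕ} (hn : 2 ≤ n)
    (x : Fin n → ℝ) (hx : ∀ j, x j ∈ Set.Icc (0 : ℝ) 1)
    (lam : ℝ) (hlam : lam ∈ Set.Icc (-1 : ℝ) 1)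
    (hx' : ∀ j, x j + lam ∈ Set.Icc (0 : ℝ) 1) :
    Hmed (fun j => x j + lam) = Hmed x + lam := by
  unfold Hmed
  have : ∀ i : Fin n, hw i (fun j => x j + lam) * (x i + lam)
      = hw i x * x i + hw i x * lam := by
    intro i; rw [hw_shift]; ring
  rw [Finset.sum_congr rfl fun i _ => this i, Finset.sum_add_distrib,
    ← Finset.sum_mul, hw_sum hn, one_mul]
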